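/- Let ζ₀ be the smallest ζ > 0 at which the function φ(ζ) = sin(ζ)/ζ attains a local minimum (equivalently, the unique solution of tan ζ = ζ in the interval (π, 3π/2)), and set φ₀ = −sin(ζ₀)/ζ₀. Then for every integer ℓ ≥ 2 and every κ ∈ (0,1/2), one has K_ℓ ≥ p/(4κ(1+φ₀)), and equality holds if and only if κ = ζ₀/(2πℓ). -/

import Mathlib

open Real Set

noncomputable section

/-- The critical coupling `K_j = πjp / (2(2πjκ - sin(2πjκ)))`. -/
def Kc (p κ : ℝ) (j : ℕ) : ℝ :=
  π * j * p / (2 * (2 * π * j * κ - Real.sin (2 * π * j * κ)))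

private lemma cos_lt_cos_of_pi_le (a b : ℝ) (h1 : π ≤ a) (h2 : a < b) (h3 : b ≤ 2 * π) :
    Real.cos a < Real.cos b := by
  rw [← Real.cos_two_pi_sub a, ← Real.cos_two_pi_sub b]
  exact Real.strictAntiOn_cos ⟨by linarith, by linarith⟩ ⟨by linarith, by linarith⟩ (by linarith)

private lemma sin_eq_mul_cos (ζ₀ : ℝ) (h1 : π < ζ₀) (h2 : ζ₀ < 3 * π / 2)
    (htan : Real.tan ζ₀ = ζ₀) : Real.sin ζ₀ = ζ₀ * Real.cos ζ₀ := by
  have hπ := Real.pi_pos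
  have hc : Real.cos ζ₀ < 0 :=
    Real.cos_neg_of_pi_div_two_lt_of_lt (by linarith) (by linarith)
  have h := Real.tan_eq_sin_div_cos ζ₀
  rw [htan] at h
  field_simp [hc.ne] at h
  linarith

private lemma sin_ge_key (ζ₀ : ℝ) (h1 : π < ζ₀) (h2 : ζ₀ < 3 * π / 2)
    (htan : Real.tan ζ₀ = ζ₀) :
    ∀ x : ℝ, 0 < x →
      Real.cos ζ₀ * x ≤ Real.sin x ∧ (Real.sin x = Real.cos ζ₀ * x ↔ x = ζ₀) := by
  have hπ := Real.pi_pos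
  have hc : Real.cos ζ₀ < 0 :=
    Real.cos_neg_of_pi_div_two_lt_of_lt (by linarith) (by linarith)
  have hsin : Real.sin ζ₀ = ζ₀ * Real.cos ζ₀ := sin_eq_mul_cos ζ₀ h1 h2 htan
  have hc2 : Real.cos ζ₀ ^ 2 * (1 + ζ₀ ^ 2) = 1 := by
    have hp := Real.sin_sq_add_cos_sq ζ₀
    rw [hsin] at hp
    nlinarith [hp]
  have hA : (2 * π * Real.cos ζ₀) ^ 2 * (1 + ζ₀ ^ 2) = 4 * π ^ 2 := by
    linear_combination 4 * π ^ 2 * hc2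
  have h2pc : 2 * π * Real.cos ζ₀ < -1 := by
    by_contra hcon
    push_neg at hcon
    have h0 : 2 * π * Real.cos ζ₀ ≤ 0 := by nlinarith
    have hsq : (2 * π * Real.cos ζ₀) ^ 2 ≤ 1 := by nlinarith
    have hz2 : ζ₀ ^ 2 < 9 * π ^ 2 / 4 := by nlinarith
    have hmul : 0 ≤ (1 - (2 * π * Real.cos ζ₀) ^ 2) * (1 + ζ₀ ^ 2) := by
      apply mul_nonneg (by linarith)
      positivity
    nlinarith [Real.pi_gt_three, hA, hmul]
  set c := Real.cos ζ₀ with hcdef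
  have hderiv : ∀ x : ℝ, HasDerivAt (fun y => Real.sin y - c * y) (Real.cos x - c) x := by
    intro x
    have := (Real.hasDerivAt_sin x).sub ((hasDerivAt_id x).const_mul c)
    exact this.congr_deriv (by simp)
  have hcont : Continuous fun y => Real.sin y - c * y := by continuity
  have hanti : StrictAntiOn (fun y => Real.sin y - c * y) (Icc π ζ₀) := by
    apply strictAntiOn_of_deriv_neg (convex_Icc _ _) hcont.continuousOn
    intro x hx
    rw [interior_Icc] at hx
    rw [(hderiv x).deriv]
    have := cos_lt_cos_of_pi_le x ζ₀ hx.1.le hx.2 (by linarith)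
    linarith
  have hmono : StrictMonoOn (fun y => Real.sin y - c * y) (Icc ζ₀ (2 * π)) := by
    apply strictMonoOn_of_deriv_pos (convex_Icc _ _) hcont.continuousOn
    intro x hx
    rw [interior_Icc] at hx
    rw [(hderiv x).deriv]
    have := cos_lt_cos_of_pi_le ζ₀ x h1.le hx.1 hx.2.le
    linarith
  have hzero : Real.sin ζ₀ - c * ζ₀ = 0 := by rw [hsin]; ring
  intro x hx
  rcases le_or_gt x π with hxπ | hxπ
  · have hs : 0 ≤ Real.sin x := Real.sin_nonneg_of_nonneg_of_le_pi hx.le hxπ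
    have hlt : c * x < Real.sin x := lt_of_lt_of_le (mul_neg_of_neg_of_pos hc hx) hs
    refine ⟨hlt.le, ⟨fun he => absurd he.symm hlt.ne, fun he => ?_⟩⟩
    rw [he] at hxπ; linarith
  rcases le_or_gt (2 * π) x with hx2 | hx2
  · have hlt : c * x < Real.sin x := by
      nlinarith [Real.neg_one_le_sin x]
    refine ⟨hlt.le, ⟨fun he => absurd he.symm hlt.ne, fun he => ?_⟩⟩
    rw [he] at hx2; linarith
  · rcases lt_trichotomy x ζ₀ with hlt' | heq | hgt
    · have h := hanti ⟨hxπ.le, hlt'.le⟩ ⟨h1.le, le_refl _⟩ hlt'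
      simp only [] at h
      refine ⟨by linarith, ⟨fun he => by rw [he] at h; linarith, fun he => absurd he hlt'.ne⟩⟩
    · subst heq
      exact ⟨by linarith, ⟨fun _ => rfl, fun _ => by linarith⟩⟩
    · have h := hmono ⟨le_refl _, by linarith⟩ ⟨hgt.le, hx2.le⟩ hgt
      simp only [] at h
      refine ⟨by linarith, ⟨fun he => by rw [he] at h; linarith, fun he => absurd he hgt.ne'⟩⟩

/-- Proposition 3.1(ii): with `ζ₀` the unique solution of `tan ζ = ζ` in `(π, 3π/2)` (the
smallest positive local minimum point of `ζ ↦ sin ζ / ζ`) and `φ₀ = -sin ζ₀ / ζ₀`, one has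
`K_ℓ ≥ p/(4κ(1+φ₀))` for all `ℓ ≥ 2` and `κ ∈ (0,1/2)`, with equality iff `κ = ζ₀/(2πℓ)`. -/
theorem Kc_lower_bound
    (p : ℝ) (hp : 0 < p)
    (ζ₀ : ℝ) (hζ₀mem : ζ₀ ∈ Set.Ioo π (3 * π / 2)) (hζ₀ : Real.tan ζ₀ = ζ₀)
    (φ₀ : ℝ) (hφ₀ : φ₀ = -Real.sin ζ₀ / ζ₀) :
    ∀ ℓ : ℕ, 2 ≤ ℓ → ∀ κ ∈ Set.Ioo (0:ℝ) (1/2),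
      p / (4 * κ * (1 + φ₀)) ≤ Kc p κ ℓ ∧
      (Kc p κ ℓ = p / (4 * κ * (1 + φ₀)) ↔ κ = ζ₀ / (2 * π * ℓ)) := by
  intro ℓ hℓ κ hκ
  obtain ⟨hκ0, hκ2⟩ := hκ
  obtain ⟨h1, h2⟩ := hζ₀mem
  have hπ := Real.pi_pos
  have hζ0pos : 0 < ζ₀ := by linarith
  have hc : Real.cos ζ₀ < 0 :=
    Real.cos_neg_of_pi_div_two_lt_of_lt (by linarith) (by linarith)
  have hsin : Real.sin ζ₀ = ζ₀ * Real.cos ζ₀ := sin_eq_mul_cos ζ₀ h1 h2 hζ₀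
  have hφ : φ₀ = -Real.cos ζ₀ := by
    rw [hφ₀, hsin]; field_simp
  have hL : (2 : ℝ) ≤ (ℓ : ℝ) := by exact_mod_cast hℓ
  have hLpos : (0 : ℝ) < (ℓ : ℝ) := by linarith
  set L : ℝ := (ℓ : ℝ) with hLdef
  set x : ℝ := 2 * π * L * κ with hxdef
  have hxpos : 0 < x := by positivity
  have key := sin_ge_key ζ₀ h1 h2 hζ₀ x hxpos
  have hxlt : Real.sin x < x := Real.sin_lt hxpos
  set c := Real.cos ζ₀ with hcdef
  have hD : 0 < 2 * (x - Real.sin x) := by linarith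
  have hE : 0 < 2 * (x * (1 - c)) := by nlinarith
  have hDE : 2 * (x - Real.sin x) ≤ 2 * (x * (1 - c)) := by nlinarith [key.1]
  have hKc : Kc p κ ℓ = π * L * p / (2 * (x - Real.sin x)) := by
    simp only [Kc, hxdef, hLdef]
  have h1c : (0:ℝ) < 1 - c := by linarith
  have hden' : (0:ℝ) < 4 * κ * (1 + -c) := by
    have : (0:ℝ) < 4 * κ := by positivity
    nlinarith
  have hBound : p / (4 * κ * (1 + φ₀)) = π * L * p / (2 * (x * (1 - c))) := by
    rw [hφ, div_eq_div_iff hden'.ne' hE.ne', hxdef]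
    ring
  rw [hKc, hBound]
  constructor
  · apply div_le_div_of_nonneg_left _ hD hDE
    positivity
  · constructor
    · intro he
      have hne : π * L * p ≠ 0 := by positivity
      rw [div_eq_div_iff hD.ne' hE.ne'] at he
      have hDeqE : 2 * (x * (1 - c)) = 2 * (x - Real.sin x) := by
        have h' : π * L * p * (2 * (x * (1 - c))) = π * L * p * (2 * (x - Real.sin x)) := by
          linear_combination he
        exact mul_left_cancel₀ hne h'
      have hsx : Real.sin x = c * x := by linear_combination (1/2 : ℝ) * hDeqE
      have hx0 : x = ζ₀ := key.2.mp hsx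
      rw [hxdef] at hx0
      rw [eq_div_iff (by positivity : 2 * π * L ≠ 0)]
      linear_combination hx0
    · intro he
      have hx0 : x = ζ₀ := by
        rw [hxdef, he]
        field_simp
      have hsx : Real.sin x = c * x := key.2.mpr hx0
      have hDeqE : 2 * (x - Real.sin x) = 2 * (x * (1 - c)) := by
        linear_combination (-2 : ℝ) * hsx
      rw [hDeqE]
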